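/- Any 2-dimensional nilalgebra over ℂ is commutative or anticommutative. More precisely: if A is a 2-dimensional ℂ-algebra in which every element x satisfies xᵏ = 0 for all bracketings of sufficiently large k (in particular x²x = xx² = 0 whenever x² ∈ span{x} forces triviality), then either xy = yx for all x,y or xy = -yx for all x,y. -/

import Mathlib

/-- `IsPow a x n` : x is a product of exactly n copies of a, in some bracketing. -/
inductive IsPow {A : Type*} [Mul A] (a : A) : A → ℕ → Prop
  | base : IsPow a a 1
  | mul {x y : A} {m n : ℕ} : IsPow a x m → IsPow a y n → IsPow a (x * y) (m + n)

section Aux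

variable {A : Type*} [NonUnitalNonAssocRing A] [Module ℂ A]
    [SMulCommClass ℂ A A] [IsScalarTower ℂ A A]

/-- left powers of x -/
private def lpow (x : A) : ℕ → A
  | 0 => x
  | k + 1 => x * lpow x k

private lemma isPow_lpow (x : A) (k : ℕ) : IsPow x (lpow x k) (k + 1) := by
  induction k with
  | zero => exact .base
  | succ k ih =>
      have h := IsPow.mul .base ih
      rw [Nat.add_comm] at h
      exact h

/-- If `x ≠ 0` and `x * x = c • x`, then `c = 0` in a nilalgebra. -/
private lemma smul_nil {x : A} {n : ℕ}
    (hnil : ∀ k : ℕ, n ≤ k → ∀ z : A, IsPow x z k → z = 0)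
    (hx : x ≠ 0) {c : ℂ} (h : x * x = c • x) : c = 0 := by
  have key : ∀ k, lpow x k = c ^ k • x := by
    intro k
    induction k with
    | zero => simp [lpow]
    | succ k ih =>
        show x * lpow x k = _
        rw [ih, mul_smul_comm, h, smul_smul, ← pow_succ]
  have hn : n ≠ 0 := by
    rintro rfl
    exact hx (hnil 1 (by omega) x .base)
  have h0 : lpow x n = 0 := hnil (n + 1) (by omega) _ (isPow_lpow x n)
  rw [key] at h0
  rcases smul_eq_zero.mp h0 with h | h
  · exact (pow_eq_zero_iff hn).mp h
  · exact absurd h hx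

/-- Key recurrence lemma: if `p` is a sequence of powers of `x` with
`p 0 = x` and `p (k+1) = (t*α) • x + (s + t*β) • y` whenever `p k = s • x + t • y`,
then `α = 0` and `β = 0`. -/
private lemma aux_ab (x y : A) (n : ℕ)
    (hind : ∀ s t : ℂ, s • x + t • y = 0 → s = 0 ∧ t = 0)
    (hnil : ∀ k : ℕ, n ≤ k → ∀ z : A, IsPow x z k → z = 0)
    (α β : ℂ) (p : ℕ → A)
    (hp0 : p 0 = x)
    (hpow : ∀ k, IsPow x (p k) (k + 1))
    (hrec : ∀ (s t : ℂ) (k : ℕ), p k = s • x + t • y →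
      p (k + 1) = (t * α) • x + (s + t * β) • y) :
    α = 0 ∧ β = 0 := by
  -- coordinates of p k
  set st : ℕ → ℂ × ℂ := fun k =>
    Nat.rec ((1 : ℂ), (0 : ℂ)) (fun _ c => (c.2 * α, c.1 + c.2 * β)) k with hst
  set s : ℕ → ℂ := fun k => (st k).1 with hs
  set t : ℕ → ℂ := fun k => (st k).2 with ht
  have hs0 : s 0 = 1 := rfl
  have ht0 : t 0 = 0 := rfl
  have hsrec : ∀ k, s (k + 1) = t k * α := fun k => rfl
  have htrec : ∀ k, t (k + 1) = s k + t k * β := fun k => rfl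
  have hcoord : ∀ k, p k = s k • x + t k • y := by
    intro k
    induction k with
    | zero => rw [hp0, hs0, ht0]; simp
    | succ k ih => rw [hrec (s k) (t k) k ih, ← hsrec k, ← htrec k]
  have hzero : ∀ k, n ≤ k → s k = 0 ∧ t k = 0 := by
    intro k hk
    have h0 : p k = 0 := hnil (k + 1) (by omega) _ (hpow k)
    rw [hcoord k] at h0
    exact hind _ _ h0
  have ht1 : t 1 = 1 := by
    have h := htrec 0
    rw [hs0, ht0] at h
    simpa using h
  -- t satisfies the two-step recurrence
  have t2rec : ∀ k, t (k + 2) = t k * α + t (k + 1) * β := by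
    intro k
    rw [htrec (k + 1), hsrec k]
  -- first, α = 0
  have hα : α = 0 := by
    by_contra hα
    have down : ∀ k, t (k + 1) = 0 → t (k + 2) = 0 → t k = 0 := by
      intro k h1 h2
      have := t2rec k
      rw [h1, h2, zero_mul, add_zero] at this
      exact (mul_eq_zero.mp this.symm).resolve_right hα
    have main : ∀ j, j ≤ n → t (n + 1 - j) = 0 ∧ t (n + 1 - j + 1) = 0 := by
      intro j hj
      induction j with
      | zero =>
          refine ⟨?_, ?_⟩
          · simpa using (hzero (n + 1) (by omega)).2
          · simpa using (hzero (n + 1 + 1) (by omega)).2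
      | succ j ih =>
          have hj' : j ≤ n := by omega
          obtain ⟨h1, h2⟩ := ih hj'
          have e1 : n + 1 - j = (n - j) + 1 := by omega
          have e2 : n + 1 - (j + 1) = n - j := by omega
          rw [e1] at h1 h2
          refine ⟨?_, ?_⟩
          · rw [e2]; exact down (n - j) h1 h2
          · rw [e2]; exact h1
    have := (main n le_rfl).1
    rw [show n + 1 - n = 1 by omega, ht1] at this
    exact one_ne_zero this
  -- now β = 0
  have hsz : ∀ k, s (k + 1) = 0 := by
    intro k; rw [hsrec k, hα, mul_zero]
  have htpow : ∀ k, t (k + 1) = β ^ k := by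
    intro k
    induction k with
    | zero => simpa using ht1
    | succ k ih =>
        rw [htrec (k + 1), hsz k, ih, zero_add, pow_succ]
  have hn : n ≠ 0 := by
    intro h
    have := (hzero 1 (by omega)).2
    rw [ht1] at this
    exact one_ne_zero this
  have : β ^ n = 0 := by
    rw [← htpow n]
    exact (hzero (n + 1) (by omega)).2
  exact ⟨hα, (pow_eq_zero_iff hn).mp this⟩

end Aux

/-- Any 2-dimensional nilalgebra over ℂ is commutative or
anticommutative. -/
theorem stmt_18 {A : Type*} [NonUnitalNonAssocRing A] [Module ℂ A]
    [SMulCommClass ℂ A A] [IsScalarTower ℂ A A]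
    (hdim : Module.finrank ℂ A = 2)
    (hnil : ∀ x : A, ∃ n : ℕ, ∀ (k : ℕ), n ≤ k → ∀ z : A, IsPow x z k → z = 0) :
    (∀ x y : A, x * y = y * x) ∨ (∀ x y : A, x * y = -(y * x)) := by
  by_cases hsq : ∀ a : A, a * a = 0
  · -- anticommutative case
    right
    intro x y
    have h := hsq (x + y)
    rw [add_mul, mul_add, mul_add, hsq x, hsq y, zero_add, add_zero] at h
    exact eq_neg_of_add_eq_zero_left h
  · -- commutative case
    left
    push_neg at hsq
    obtain ⟨x, hx2⟩ := hsq
    set y : A := x * x with hy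
    obtain ⟨n, hn⟩ := hnil x
    have hx0 : x ≠ 0 := by
      intro h
      apply hx2
      rw [hy, h, mul_zero]
    -- linear independence of x and y
    have hind : ∀ s t : ℂ, s • x + t • y = 0 → s = 0 ∧ t = 0 := by
      intro s t h
      by_cases htz : t = 0
      · subst htz
        rw [zero_smul, add_zero] at h
        exact ⟨(smul_eq_zero.mp h).resolve_right hx0, rfl⟩
      · exfalso
        have hxx : x * x = (-(s / t)) • x := by
          have h' : t • (x * x) = (-s) • x := by
            rw [neg_smul, ← hy]
            exact eq_neg_of_add_eq_zero_right h
          calc x * x = t⁻¹ • (t • (x * x)) := by rw [smul_smul, inv_mul_cancel₀ htz, one_smul]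
            _ = t⁻¹ • ((-s) • x) := by rw [h']
            _ = (-(s / t)) • x := by rw [smul_smul]; ring_nf
        have := smul_nil hn hx0 hxx
        have hs0 : s = 0 := by
          field_simp at this
          simpa using this
        apply hx2
        rw [hs0, zero_smul, zero_add] at h
        rw [hy]
        exact (smul_eq_zero.mp h).resolve_left htz
    have hy0 : y ≠ 0 := hx2
    -- x and y span A
    have hspan : ∀ z : A, ∃ s t : ℂ, z = s • x + t • y := by
      have hfd : FiniteDimensional ℂ A := .of_finrank_eq_succ hdim
      have hli : LinearIndependent ℂ ![x, y] := LinearIndependent.pair_iff.mpr hind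
      have hcard : Module.finrank ℂ
          (Submodule.span ℂ (Set.range ![x, y])) = 2 := by
        rw [finrank_span_eq_card hli, Fintype.card_fin]
      have htop : Submodule.span ℂ (Set.range ![x, y]) = ⊤ :=
        Submodule.eq_top_of_finrank_eq (by rw [hcard, hdim])
      intro z
      have hz : z ∈ Submodule.span ℂ ({x, y} : Set A) := by
        have : (Set.range ![x, y]) = {x, y} := by
          simp [Matrix.range_cons, Matrix.range_empty, Set.pair_comm]
        rw [this] at htop
        rw [htop]; trivial
      obtain ⟨s, t, h⟩ := Submodule.mem_span_pair.mp hz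
      exact ⟨s, t, h.symm⟩
    -- x * y = 0
    obtain ⟨α, β, hxy⟩ := hspan (x * y)
    have hab : α = 0 ∧ β = 0 := by
      refine aux_ab x y n hind hn α β (lpow x) rfl (isPow_lpow x) ?_
      intro s t k hk
      show x * lpow x k = _
      rw [hk, mul_add, mul_smul_comm, mul_smul_comm, ← hy, hxy,
        smul_add, smul_smul, smul_smul, add_comm ((s : ℂ) • y), add_assoc,
        ← add_smul, add_comm (t * β) s]
    have hxy0 : x * y = 0 := by
      rw [hxy, hab.1, hab.2, zero_smul, zero_smul, add_zero]
    -- y * x = 0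
    obtain ⟨γ, δ, hyx⟩ := hspan (y * x)
    have hrpow : ∀ k, IsPow x (Nat.rec x (fun _ z => z * x) k : A) (k + 1) := by
      intro k
      induction k with
      | zero => exact .base
      | succ k ih => exact ih.mul .base
    have hgd : γ = 0 ∧ δ = 0 := by
      refine aux_ab x y n hind hn γ δ (fun k => Nat.rec x (fun _ z => z * x) k) rfl hrpow ?_
      intro s t k hk
      replace hk : (Nat.rec x (fun _ z => z * x) k : A) = s • x + t • y := hk
      show (Nat.rec x (fun _ z => z * x) k : A) * x = _
      rw [hk, add_mul, smul_mul_assoc, smul_mul_assoc, ← hy, hyx,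
        smul_add, smul_smul, smul_smul, add_comm ((s : ℂ) • y), add_assoc,
        ← add_smul, add_comm (t * δ) s]
    have hyx0 : y * x = 0 := by
      rw [hyx, hgd.1, hgd.2, zero_smul, zero_smul, add_zero]
    -- y * y = 0
    obtain ⟨ε, ζ, hyy⟩ := hspan (y * y)
    have hpy : IsPow x y 2 := by
      have := IsPow.mul (a := x) .base .base
      rw [← hy] at this
      exact this
    have hζ : ζ = 0 ∨ y * y = 0 := by
      by_cases hw : y * y = 0
      · exact Or.inr hw
      left
      -- u k = ζ^k • (y*y), IsPow x (u k) (2*k + 4)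
      have key : ∀ k : ℕ, IsPow x ((ζ ^ k) • (y * y)) (2 * k + 4) ∨ ζ = 0 := by
        intro k
        induction k with
        | zero =>
            left
            simpa using hpy.mul hpy
        | succ k ih =>
            rcases ih with ih | ih
            · left
              have h2 : y * ((ζ ^ k) • (y * y)) = (ζ ^ (k + 1)) • (y * y) := by
                rw [mul_smul_comm, hyy, mul_add, mul_smul_comm, mul_smul_comm,
                  hyx0, smul_zero, zero_add, smul_smul, ← hyy, ← pow_succ]
              have := hpy.mul ih
              rw [h2] at this
              have he : 2 + (2 * k + 4) = 2 * (k + 1) + 4 := by omega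
              rwa [he] at this
            · exact Or.inr ih
      rcases key (n + 1) with h | h
      · have h0 := hn (2 * (n + 1) + 4) (by omega) _ h
        rcases smul_eq_zero.mp h0 with h | h
        · exact (pow_eq_zero_iff (by omega : n + 1 ≠ 0)).mp h
        · exact absurd h hw
      · exact h
    have hyy0 : y * y = 0 := by
      rcases hζ with hζ | hw
      · -- y * y = ε • x ; squaring sequence
        subst hζ
        rw [zero_smul, add_zero] at hyy
        by_cases hε : ε = 0
        · rw [hyy, hε, zero_smul]
        exfalso
        -- squares a k, with a 0 = y
        set a : ℕ → A := fun k => Nat.rec y (fun _ z => z * z) k with ha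
        have hak : ∀ k, IsPow x (a k) (2 ^ (k + 1)) := by
          intro k
          induction k with
          | zero => exact hpy
          | succ k ih =>
              have := ih.mul ih
              rw [show 2 ^ (k + 1) + 2 ^ (k + 1) = 2 ^ (k + 1 + 1) by ring] at this
              exact this
        have hinv : ∀ k, ∃ c : ℂ, c ≠ 0 ∧ (a k = c • x ∨ a k = c • y) := by
          intro k
          induction k with
          | zero => exact ⟨1, one_ne_zero, Or.inr (one_smul ℂ y).symm⟩
          | succ k ih =>
              obtain ⟨c, hc, hcase⟩ := ih
              rcases hcase with hcx | hcy
              · refine ⟨c * c, mul_ne_zero hc hc, Or.inr ?_⟩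
                show a k * a k = _
                rw [hcx, smul_mul_assoc, mul_smul_comm, ← hy, smul_smul]
              · refine ⟨c * c * ε, mul_ne_zero (mul_ne_zero hc hc) hε, Or.inl ?_⟩
                show a k * a k = _
                rw [hcy, smul_mul_assoc, mul_smul_comm, hyy, smul_smul, smul_smul]
        obtain ⟨c, hc, hcase⟩ := hinv n
        have h0 : a n = 0 := hn (2 ^ (n + 1)) (le_trans (by omega) (Nat.le_of_lt
          (Nat.lt_two_pow_self (n := n + 1)))) _ (hak n)
        rcases hcase with h | h <;> rw [h0] at h
        · rcases smul_eq_zero.mp h.symm with h | h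
          · exact hc h
          · exact hx0 h
        · rcases smul_eq_zero.mp h.symm with h | h
          · exact hc h
          · exact hy0 h
      · exact hw
    -- now the algebra is commutative
    intro u v
    obtain ⟨s, t, hu⟩ := hspan u
    obtain ⟨s', t', hv⟩ := hspan v
    rw [hu, hv]
    rw [add_mul, add_mul, mul_add, mul_add, mul_add, mul_add]
    simp only [smul_mul_assoc, mul_smul_comm, ← hy, hxy0, hyx0, hyy0,
      smul_zero, add_zero, zero_add, smul_smul]
    rw [mul_comm]
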